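/- In a finite possibilistic Kripke structure, for sets C, B ⊆ S and any state s: Po(s ⊨ C U B) = ⨆_{n ∈ ℕ} Po(s ⊨ C U^{≤n} B), and moreover Po(s ⊨ C U B) = Po(s ⊨ C U^{≤n} B) whenever n ≥ |S \ (S₌₁ ∪ S₌₀)| where S₌₁ = B and S₌₀ = S \ (C ∪ B). -/

import Mathlib

open scoped ENNReal

/-- the set of paths of a possibilistic Kripke structure starting at `s`. -/
def PathsFrom {S : Type*} (P : S → S → ℝ≥0∞) (s : S) : Set (ℕ → S) :=
  {π | π 0 = s ∧ ∀ i, 0 < P (π i) (π (i + 1))}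

/-- the possibility `Po(s ⊨ φ)` of the set of paths from `s` satisfying `φ`. -/
noncomputable def PoSat {S : Type*} (P : S → S → ℝ≥0∞) (s : S) (φ : Set (ℕ → S)) : ℝ≥0∞ :=
  ⨆ π ∈ PathsFrom P s ∩ φ, ⨅ i, P (π i) (π (i + 1))

lemma key {S : Type*} [Fintype S] (P : S → S → ℝ≥0∞) (s : S) (C B : Set S) :
    ∀ k (π : ℕ → S), π 0 = s → (∀ i, 0 < P (π i) (π (i + 1))) →
      π k ∈ B → (∀ i < k, π i ∈ C) →
      ∃ π' : ℕ → S, π' 0 = s ∧ (∀ i, 0 < P (π' i) (π' (i + 1))) ∧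
        (∃ k' ≤ (C \ B).ncard, π' k' ∈ B ∧ ∀ i < k', π' i ∈ C) ∧
        (⨅ i, P (π i) (π (i + 1))) ≤ ⨅ i, P (π' i) (π' (i + 1)) := by
  intro k
  induction k using Nat.strong_induction_on with
  | _ k IH =>
  intro π h0 hpos hkB hkC
  by_cases hk : k ≤ (C \ B).ncard
  · exact ⟨π, h0, hpos, ⟨k, hk, hkB, hkC⟩, le_rfl⟩
  push_neg at hk
  by_cases hmin : ∃ j < k, π j ∈ B
  · obtain ⟨j, hj, hjB⟩ := hmin
    exact IH j hj π h0 hpos hjB (fun i hi => hkC i (hi.trans hj))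
  push_neg at hmin
  have hmem : ∀ i < k, π i ∈ C \ B := fun i hi => ⟨hkC i hi, hmin i hi⟩
  have hfin : (C \ B).Finite := Set.toFinite _
  have hpig : ∃ a ∈ Finset.range k, ∃ b ∈ Finset.range k, a ≠ b ∧ π a = π b := by
    apply Finset.exists_ne_map_eq_of_card_lt_of_maps_to (t := hfin.toFinset)
    · rw [Finset.card_range]
      rwa [Set.ncard_eq_toFinset_card (C \ B) hfin] at hk
    · intro i hi
      simp only [Finset.mem_coe, Finset.mem_range] at hi
      exact (Set.Finite.mem_toFinset hfin).2 (hmem i hi)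
  obtain ⟨a, ha, b, hb, hab, heq⟩ := hpig
  simp only [Finset.mem_range] at ha hb
  -- WLOG i < j
  obtain ⟨i, j, hij, hjk, hijeq⟩ : ∃ i j, i < j ∧ j < k ∧ π i = π j := by
    rcases lt_or_gt_of_ne hab with h | h
    · exact ⟨a, b, h, hb, heq⟩
    · exact ⟨b, a, h, ha, heq.symm⟩
  set d := j - i with hd
  have hd0 : 0 < d := by omega
  set π' : ℕ → S := fun t => if t < i then π t else π (t + d) with hπ'
  have htrans : ∀ t, ∃ t', π' t = π t' ∧ π' (t + 1) = π (t' + 1) := by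
    intro t
    by_cases ht : t < i
    · refine ⟨t, by simp [hπ', ht], ?_⟩
      by_cases ht1 : t + 1 < i
      · simp [hπ', ht1]
      · have h1 : t + 1 = i := by omega
        have h2 : i + d = j := by omega
        simp only [hπ', ht1, if_false]
        rw [h1, h2]
        exact hijeq.symm
    · refine ⟨t + d, by simp [hπ', ht], ?_⟩
      have : ¬ t + 1 < i := by omega
      simp only [hπ', this, if_neg, if_false]
      ring_nf
  have h0' : π' 0 = s := by
    by_cases hi : 0 < i
    · simpa [hπ', hi] using h0
    · have : i = 0 := by omega
      have hjd : (0:ℕ) + d = j := by omega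
      simp only [hπ', lt_irrefl, if_neg (by omega : ¬ (0:ℕ) < i)]
      rw [hjd, ← hijeq, this, h0]
  have hpos' : ∀ t, 0 < P (π' t) (π' (t + 1)) := by
    intro t
    obtain ⟨t', h1, h2⟩ := htrans t
    rw [h1, h2]; exact hpos t'
  have hv : (⨅ t, P (π t) (π (t + 1))) ≤ ⨅ t, P (π' t) (π' (t + 1)) := by
    refine le_iInf fun t => ?_
    obtain ⟨t', h1, h2⟩ := htrans t
    rw [h1, h2]; exact iInf_le _ t'
  have hkd : k - d < k := by omega
  have hB' : π' (k - d) ∈ B := by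
    have : ¬ k - d < i := by omega
    simp only [hπ', this, if_false]
    have : k - d + d = k := by omega
    rw [this]; exact hkB
  have hC' : ∀ t < k - d, π' t ∈ C := by
    intro t ht
    by_cases h : t < i
    · simp only [hπ', h, if_true]; exact hkC t (by omega)
    · simp only [hπ', h, if_false]; exact hkC (t + d) (by omega)
  obtain ⟨π'', h0'', hpos'', hw'', hv''⟩ := IH (k - d) hkd π' h0' hpos' hB' hC'
  exact ⟨π'', h0'', hpos'', hw'', hv.trans hv''⟩

lemma poSat_mono {S : Type*} (P : S → S → ℝ≥0∞) (s : S) {φ ψ : Set (ℕ → S)}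
    (h : φ ⊆ ψ) : PoSat P s φ ≤ PoSat P s ψ := by
  unfold PoSat
  refine iSup₂_le fun π hπ => ?_
  exact le_biSup (fun ρ : ℕ → S => ⨅ i, P (ρ i) (ρ (i + 1))) (⟨hπ.1, h hπ.2⟩ : π ∈ PathsFrom P s ∩ ψ)

/-- in a finite possibilistic Kripke structure,
`Po(s ⊨ C U B) = ⨆_n Po(s ⊨ C U^{≤n} B)`, and moreover
`Po(s ⊨ C U B) = Po(s ⊨ C U^{≤n} B)` whenever `n ≥ |S \ (S₌₁ ∪ S₌₀)|`,
where `S₌₁ = B` and `S₌₀ = S \ (C ∪ B)` (so `S \ (S₌₁ ∪ S₌₀) = C \ B`). -/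
theorem stmt14 {S : Type*} [Fintype S] (P : S → S → ℝ≥0∞)
    (hP1 : ∀ s t, P s t ≤ 1) (hPn : ∀ s, (⨆ t, P s t) = 1)
    (s : S) (C B : Set S) :
    PoSat P s {π | ∃ k, π k ∈ B ∧ ∀ i < k, π i ∈ C} =
        (⨆ n : ℕ, PoSat P s {π | ∃ k ≤ n, π k ∈ B ∧ ∀ i < k, π i ∈ C}) ∧
      ∀ n : ℕ, (Set.univ \ (B ∪ (Set.univ \ (C ∪ B)))).ncard ≤ n →
        PoSat P s {π | ∃ k, π k ∈ B ∧ ∀ i < k, π i ∈ C} =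
          PoSat P s {π | ∃ k ≤ n, π k ∈ B ∧ ∀ i < k, π i ∈ C} := by
  have hset : Set.univ \ (B ∪ (Set.univ \ (C ∪ B))) = C \ B := by
    ext x; simp only [Set.mem_diff, Set.mem_union, Set.mem_univ, true_and]; tauto
  have hbound : ∀ n, (C \ B).ncard ≤ n →
      PoSat P s {π | ∃ k, π k ∈ B ∧ ∀ i < k, π i ∈ C} =
        PoSat P s {π | ∃ k ≤ n, π k ∈ B ∧ ∀ i < k, π i ∈ C} := by
    intro n hn
    refine le_antisymm ?_ (poSat_mono P s fun π ⟨k, _, hkB, hkC⟩ => ⟨k, hkB, hkC⟩)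
    unfold PoSat
    refine iSup₂_le fun π hπ => ?_
    obtain ⟨⟨h0, hpos⟩, k, hkB, hkC⟩ := hπ
    obtain ⟨π', h0', hpos', ⟨k', hk', hB', hC'⟩, hv⟩ := key P s C B k π h0 hpos hkB hkC
    refine hv.trans ?_
    exact le_biSup (fun ρ : ℕ → S => ⨅ i, P (ρ i) (ρ (i + 1)))
      (⟨⟨h0', hpos'⟩, k', hk'.trans hn, hB', hC'⟩ :
        π' ∈ PathsFrom P s ∩ {π | ∃ k ≤ n, π k ∈ B ∧ ∀ i < k, π i ∈ C})
  constructor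
  · refine le_antisymm ?_ ?_
    · rw [hbound _ le_rfl]
      exact le_iSup (fun n => PoSat P s {π | ∃ k ≤ n, π k ∈ B ∧ ∀ i < k, π i ∈ C})
        ((C \ B).ncard)
    · exact iSup_le fun n => poSat_mono P s fun π ⟨k, _, hkB, hkC⟩ => ⟨k, hkB, hkC⟩
  · intro n hn
    rw [hset] at hn
    exact hbound n hn
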